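/- arXiv:1809.00742 — 5 statements merged into one kernel-verified Lean document; each statement's English description precedes it below -/
import Mathlib

section
/- Let P be a set of forbidden patterns (possibly of different lengths). Then P is right-justified if and only if for every pattern τ in P for which τ^← exists (i.e., the largest entry of τ is not in the first position), the permutation τ^← contains some pattern belonging to P. -/
open Equiv

/-- The pattern `σ` (a length-`k` permutation) is contained in the length-`n`
permutation `π` : some subsequence of `π` is order isomorphic to `σ`. -/
def Contains {k n : ℕ} (σ : Equiv.Perm (Fin k)) (π : Equiv.Perm (Fin n)) : Prop :=
  ∃ f : Fin k → Fin n, StrictMono f ∧ ∀ a b : Fin k, σ a < σ b ↔ π (f a) < π (f b)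

/-- A set of forbidden patterns, of possibly different lengths. -/
abbrev PatternSet : Type := Set ((k : ℕ) × Equiv.Perm (Fin k))

/-- `π` avoids every pattern of `P`, i.e. `π ∈ S_n(P)`. -/
def AvoidsSet {n : ℕ} (π : Equiv.Perm (Fin n)) (P : PatternSet) : Prop :=
  ∀ τ ∈ P, ¬ Contains τ.2 π

/-- The (0-indexed) position of the largest entry of `α`. -/
def maxPos {n : ℕ} (α : Equiv.Perm (Fin (n + 1))) : Fin (n + 1) := α⁻¹ (Fin.last n)

/-- `α^→` : transpose the largest entry with the entry immediately to its right
(meaningful when `maxPos α ≠ Fin.last n`, i.e. the largest entry is not last). -/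
def moveRight {n : ℕ} (α : Equiv.Perm (Fin (n + 1))) : Equiv.Perm (Fin (n + 1)) :=
  α * Equiv.swap (maxPos α) (maxPos α + 1)

/-- `α^←` : transpose the largest entry with the entry immediately to its left
(meaningful when `maxPos α ≠ 0`, i.e. the largest entry is not first). -/
def moveLeft {n : ℕ} (α : Equiv.Perm (Fin (n + 1))) : Equiv.Perm (Fin (n + 1)) :=
  α * Equiv.swap (maxPos α) (maxPos α - 1)

/-- `P` is right-justified : moving the largest entry of a `P`-avoiding permutation one
position to the right again yields a `P`-avoiding permutation. -/
def RightJustified (P : PatternSet) : Prop :=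
  ∀ (n : ℕ) (α : Equiv.Perm (Fin (n + 1))),
    AvoidsSet α P → maxPos α ≠ Fin.last n → AvoidsSet (moveRight α) P

/-- `α^{↓i}` : insert the new largest entry into site `i` of `α`; the `n+1` sites of a
length-`n` permutation are numbered `1, …, n+1` from right to left, so the new largest
entry lands at 0-indexed position `n - (i - 1)`. -/
def insertMax {n : ℕ} (α : Equiv.Perm (Fin n)) (i : ℕ) : Equiv.Perm (Fin (n + 1)) :=
  (finSuccEquivLast.permCongr.symm α.optionCongr) *
    (Fin.revPerm * Fin.cycleRange (Fin.rev (⟨n - (i - 1), by omega⟩ : Fin (n + 1))) *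
      Fin.revPerm)

/-- Site `i` of `α ∈ S_n(P)` is active (with respect to `P`). -/
def ActiveSite {n : ℕ} (P : PatternSet) (α : Equiv.Perm (Fin n)) (i : ℕ) : Prop :=
  1 ≤ i ∧ i ≤ n + 1 ∧ AvoidsSet (insertMax α i) P

/-- The number of active sites of `α` with respect to `P`. -/
noncomputable def numActive {n : ℕ} (P : PatternSet) (α : Equiv.Perm (Fin n)) : ℕ :=
  Set.ncard {i : ℕ | ActiveSite P α i}

/-- Delete the largest entry of a length-`(n+1)` permutation. -/
def deleteMax {n : ℕ} (π : Equiv.Perm (Fin (n + 1))) : Equiv.Perm (Fin n) :=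
  Equiv.removeNone (finSuccEquivLast.permCongr
    (π * (Fin.revPerm * Fin.cycleRange (Fin.rev (maxPos π)) * Fin.revPerm)⁻¹))

/-- The pattern `321`. -/
def perm321 : Equiv.Perm (Fin 3) := ⟨![2, 1, 0], ![2, 1, 0], by decide, by decide⟩
/-- The pattern `312`. -/
def perm312 : Equiv.Perm (Fin 3) := ⟨![2, 0, 1], ![1, 2, 0], by decide, by decide⟩
/-- The pattern `231`. -/
def perm231 : Equiv.Perm (Fin 3) := ⟨![1, 2, 0], ![2, 0, 1], by decide, by decide⟩
/-- The pattern `2431`. -/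
def perm2431 : Equiv.Perm (Fin 4) := ⟨![1, 3, 2, 0], ![3, 0, 2, 1], by decide, by decide⟩
/-- The pattern `4321`. -/
def perm4321 : Equiv.Perm (Fin 4) := ⟨![3, 2, 1, 0], ![3, 2, 1, 0], by decide, by decide⟩

/-- The pattern `(m+1) 1 2 … m` of length `m + 1`. -/
def sigmaM (m : ℕ) : Equiv.Perm (Fin (m + 1)) := (finRotate (m + 1))⁻¹

/-- The pattern `p (p+1) 1 2 … (p-1)` of length `p + 1`. -/
def sigmaP (p : ℕ) : Equiv.Perm (Fin (p + 1)) := ((finRotate (p + 1))⁻¹) ^ 2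

/-- The largest entry of `α` plays the role of `3` in an occurrence of the pattern
`231` : there are positions `a < b < c` with `α b` largest, `α a < α b` and `α c < α a`. -/
def MaxIn231 {n : ℕ} (α : Equiv.Perm (Fin n)) : Prop :=
  ∃ a b c : Fin n, a < b ∧ b < c ∧ (∀ x, α x ≤ α b) ∧ α a < α b ∧ α c < α a

/-- The last `p` entries of `α` are in decreasing order. -/
def LastDecreasing {n : ℕ} (α : Equiv.Perm (Fin n)) (p : ℕ) : Prop :=
  ∀ a b : Fin n, n - p ≤ (a : ℕ) → a < b → α b < α a

open Classical in
/-- The color `d(α)` : it is `1` iff the largest entry of `α` plays the role of `3` in an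
occurrence of `231` and the length-`p` suffix of `α` is not decreasing; otherwise `0`. -/
noncomputable def colorD {n : ℕ} (p : ℕ) (α : Equiv.Perm (Fin n)) : ℕ :=
  if MaxIn231 α ∧ ¬ LastDecreasing α p then 1 else 0

open Classical in
/-- The color used for `P = {312, 2431}` : it is `1` iff the largest entry of `α` plays
the role of `3` in an occurrence of `231`; otherwise `0`. -/
noncomputable def colorD2 {n : ℕ} (α : Equiv.Perm (Fin n)) : ℕ :=
  if MaxIn231 α then 1 else 0

lemma contains_refl {k : ℕ} (σ : Equiv.Perm (Fin k)) : Contains σ σ :=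
  ⟨id, strictMono_id, fun _ _ => Iff.rfl⟩

lemma contains_trans {k l n : ℕ} {ρ : Equiv.Perm (Fin k)} {σ : Equiv.Perm (Fin l)}
    {π : Equiv.Perm (Fin n)} (h1 : Contains ρ σ) (h2 : Contains σ π) : Contains ρ π := by
  obtain ⟨f, hf, hf2⟩ := h1
  obtain ⟨g, hg, hg2⟩ := h2
  exact ⟨g ∘ f, hg.comp hf, fun a b => (hf2 a b).trans (hg2 _ _)⟩

lemma maxPos_moveLeft {n : ℕ} (τ : Equiv.Perm (Fin (n + 1))) :
    maxPos (moveLeft τ) = maxPos τ - 1 := by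
  unfold maxPos moveLeft
  rw [mul_inv_rev, Equiv.Perm.mul_apply, Equiv.swap_inv]
  exact Equiv.swap_apply_left _ _

lemma moveRight_moveLeft {n : ℕ} (τ : Equiv.Perm (Fin (n + 1))) :
    moveRight (moveLeft τ) = τ := by
  rw [moveRight, maxPos_moveLeft, sub_add_cancel, moveLeft, mul_assoc,
    Equiv.swap_comm (maxPos τ - 1), Equiv.swap_mul_self, mul_one]

/-- A set `P` of (possibly different lengths) forbidden patterns is
right-justified if and only if, for every pattern `τ ∈ P` for which `τ^←` exists
(the largest entry of `τ` is not in the first position), `τ^←` contains some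
pattern belonging to `P`. -/
theorem rightJustified_iff_moveLeft_contains (P : PatternSet) :
    RightJustified P ↔
      ∀ (m : ℕ) (τ : Equiv.Perm (Fin (m + 1))),
        (⟨m + 1, τ⟩ : (k : ℕ) × Equiv.Perm (Fin k)) ∈ P → maxPos τ ≠ 0 →
          ∃ ρ ∈ P, Contains ρ.2 (moveLeft τ) := by
  constructor
  · -- right-justified → every τ^← contains a pattern of P
    intro hRJ m τ hτ hmax
    by_contra hc
    push_neg at hc
    have havoid : AvoidsSet (moveLeft τ) P := fun ρ hρ => hc ρ hρ
    have hne : maxPos (moveLeft τ) ≠ Fin.last m := by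
      rw [maxPos_moveLeft]
      intro h
      apply hmax
      have : maxPos τ = Fin.last m + 1 := by
        rw [← h, sub_add_cancel]
      rw [this, Fin.last_add_one]
    have := hRJ m (moveLeft τ) havoid hne ⟨m + 1, τ⟩ hτ
    rw [moveRight_moveLeft] at this
    exact this (contains_refl τ)
  · -- converse
    intro h n α hα hmax
    rintro ⟨k, σ⟩ hσP hcont
    rcases k with _ | m
    · exact hα ⟨0, σ⟩ hσP ⟨Fin.elim0, fun x => x.elim0, fun x => x.elim0⟩
    obtain ⟨f, hf, hiso⟩ := hcont
    set j := maxPos α with hj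
    have hjn : (j : ℕ) < n := by
      have h1 := j.isLt
      rcases Nat.lt_or_ge (j : ℕ) n with h' | h'
      · exact h'
      · exact absurd (Fin.ext (by omega : (j : ℕ) = n)) hmax
    have hjlt : j < Fin.last n := by
      rw [Fin.lt_def, Fin.val_last]; exact hjn
    have hval : ((j + 1 : Fin (n + 1)) : ℕ) = (j : ℕ) + 1 := Fin.val_add_one_of_lt hjlt
    have hmr : moveRight α = α * Equiv.swap j (j + 1) := rfl
    have hαj : α j = Fin.last n := by
      rw [hj]; exact α.apply_symm_apply _
    have hβj : moveRight α j = α (j + 1) := by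
      rw [hmr, Equiv.Perm.mul_apply, Equiv.swap_apply_left]
    have hβj1 : moveRight α (j + 1) = Fin.last n := by
      rw [hmr, Equiv.Perm.mul_apply, Equiv.swap_apply_right, hαj]
    have hβo : ∀ x, x ≠ j → x ≠ j + 1 → moveRight α x = α x := fun x h1 h2 => by
      rw [hmr, Equiv.Perm.mul_apply, Equiv.swap_apply_of_ne_of_ne h1 h2]
    by_cases hj1mem : ∃ a, f a = j + 1
    · -- the occurrence uses position j+1 (where the max sits in moveRight α)
      obtain ⟨a, hfa⟩ := hj1mem
      have hmax_a : σ a = Fin.last m := by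
        have h1 : ∀ b, ¬ σ a < σ b := by
          intro b hb
          have h2 := (hiso a b).mp hb
          rw [hfa, hβj1] at h2
          exact absurd h2 (not_lt.mpr (Fin.le_last _))
        have h2 := h1 (σ⁻¹ (Fin.last m))
        rw [show σ (σ⁻¹ (Fin.last m)) = Fin.last m from σ.apply_symm_apply _] at h2
        exact le_antisymm (Fin.le_last _) (not_lt.mp h2)
      have ha_max : maxPos σ = a := by
        rw [maxPos, ← hmax_a, show σ⁻¹ (σ a) = a from σ.symm_apply_apply a]
      by_cases hjmem : ∃ b, f b = j
      · -- both j and j+1 are used : α contains σ^← which contains some ρ ∈ P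
        obtain ⟨b, hfb⟩ := hjmem
        have hba : b < a := by
          rw [← hf.lt_iff_lt, hfa, hfb, Fin.lt_def, hval]
          omega
        have hsucc : (b : ℕ) + 1 = (a : ℕ) := by
          by_contra hcc
          have hba' : (b : ℕ) < (a : ℕ) := hba
          have hlt : (b : ℕ) + 1 < (a : ℕ) := by omega
          set c : Fin (m + 1) := ⟨(b : ℕ) + 1, by omega⟩ with hc
          have h1 : f b < f c := hf (by rw [Fin.lt_def]; simp [hc])
          have h2 : f c < f a := hf (by rw [Fin.lt_def]; simp [hc]; omega)
          rw [hfb] at h1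
          rw [hfa] at h2
          rw [Fin.lt_def] at h1 h2
          rw [hval] at h2
          omega
        have hblt : b < Fin.last m := by
          rw [Fin.lt_def, Fin.val_last]
          have := a.isLt; omega
        have hb1 : a = b + 1 := by
          apply Fin.ext
          rw [Fin.val_add_one_of_lt hblt]
          omega
        have hab1 : a - 1 = b := by rw [hb1, add_sub_cancel_right]
        have hane : maxPos σ ≠ 0 := by
          rw [ha_max]
          intro h0
          rw [h0] at hsucc
          simp at hsucc
        obtain ⟨ρ, hρP, hρc⟩ := h m σ hσP hane
        have hml : ∀ x, moveLeft σ x = σ (Equiv.swap a b x) := by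
          intro x
          rw [moveLeft, ha_max, hab1, Equiv.Perm.mul_apply]
        have key : ∀ x, α (f x) = moveRight α (f (Equiv.swap a b x)) := by
          intro x
          rcases eq_or_ne x a with rfl | hxa
          · rw [Equiv.swap_apply_left, hfb, hβj, hfa]
          rcases eq_or_ne x b with rfl | hxb
          · rw [Equiv.swap_apply_right, hfa, hβj1, hfb, hαj]
          · rw [Equiv.swap_apply_of_ne_of_ne hxa hxb,
              hβo _ (fun hh => hxb (hf.injective (hfb ▸ hh)))
                (fun hh => hxa (hf.injective (hfa ▸ hh)))]
        have hcml : Contains (moveLeft σ) α := by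
          refine ⟨f, hf, fun x y => ?_⟩
          rw [hml x, hml y, hiso (Equiv.swap a b x) (Equiv.swap a b y), ← key x, ← key y]
        exact hα ρ hρP (contains_trans hρc hcml)
      · -- j unused : slide the max from j+1 to j, getting an occurrence of σ in α
        push_neg at hjmem
        set g : Fin (m + 1) → Fin (n + 1) := fun x => if x = a then j else f x with hg
        have key : ∀ x, α (g x) = moveRight α (f x) := by
          intro x
          rcases eq_or_ne x a with rfl | hxa
          · simp only [hg, if_pos rfl]
            rw [hfa, hβj1, hαj]
          · simp only [hg, if_neg hxa]
            rw [hβo _ (hjmem x) (fun hh => hxa (hf.injective (hfa ▸ hh)))]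
        have hmono : StrictMono g := by
          intro x y hxy
          have hfxy : (f x : ℕ) < (f y : ℕ) := hf hxy
          have hfaj : (f a : ℕ) = (j : ℕ) + 1 := by rw [hfa, hval]
          have hnj : ∀ z, (f z : ℕ) ≠ (j : ℕ) := fun z hz => hjmem z (Fin.ext hz)
          simp only [hg]
          rw [Fin.lt_def]
          by_cases hxa : x = a <;> by_cases hya : y = a
          · exact absurd (hxa.trans hya.symm) (ne_of_lt hxy)
          · rw [if_pos hxa, if_neg hya]
            have h1 : (f x : ℕ) = (f a : ℕ) := by rw [hxa]
            omega
          · rw [if_neg hxa, if_pos hya]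
            have h1 : (f y : ℕ) = (f a : ℕ) := by rw [hya]
            have h2 := hnj x
            omega
          · rw [if_neg hxa, if_neg hya]; exact hfxy
        exact hα ⟨m + 1, σ⟩ hσP
          ⟨g, hmono, fun x y => by rw [key x, key y]; exact hiso x y⟩
    · -- j+1 unused : positions other than j+1, shift j to j+1
      push_neg at hj1mem
      set g : Fin (m + 1) → Fin (n + 1) := fun x => if f x = j then j + 1 else f x with hg
      have key : ∀ x, α (g x) = moveRight α (f x) := by
        intro x
        rcases eq_or_ne (f x) j with hfx | hfx
        · simp only [hg, if_pos hfx, hfx, hβj]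
        · simp only [hg, if_neg hfx]
          rw [hβo _ hfx (hj1mem x)]
      have hmono : StrictMono g := by
        intro x y hxy
        have hfxy : (f x : ℕ) < (f y : ℕ) := hf hxy
        have hn1 : ∀ z, (f z : ℕ) ≠ (j : ℕ) + 1 := fun z hz =>
          hj1mem z (Fin.ext (by rw [hval]; exact hz))
        simp only [hg]
        rw [Fin.lt_def]
        by_cases hfx : f x = j <;> by_cases hfy : f y = j
        · exact absurd (hfx.trans hfy.symm) (ne_of_lt (hf hxy))
        · rw [if_pos hfx, if_neg hfy, hval]
          have h1 : (f x : ℕ) = (j : ℕ) := by rw [hfx]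
          have h2 := hn1 y
          omega
        · rw [if_neg hfx, if_pos hfy]
          have h1 : (f y : ℕ) = (j : ℕ) := by rw [hfy]
          omega
        · rw [if_neg hfx, if_neg hfy]; exact hfxy
      exact hα ⟨m + 1, σ⟩ hσP
        ⟨g, hmono, fun x y => by rw [key x, key y]; exact hiso x y⟩
end

section
/- A singleton set of forbidden patterns P={τ}, where τ is a permutation of length k≥1, is right-justified if and only if τ(1)=k, i.e., the first entry of τ is its largest entry. -/
open Equiv

lemma strictMono_fin_eq_id {n : ℕ} {f : Fin n → Fin n} (hf : StrictMono f) : f = id := by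
  have hs : Function.Surjective f := Finite.surjective_of_injective hf.injective
  have : hf.orderIsoOfSurjective f hs = OrderIso.refl (Fin n) := Subsingleton.elim _ _
  funext i
  have := congrArg (fun (e : Fin n ≃o Fin n) => e i) this
  simpa using this

/-- A singleton set of forbidden patterns `P = {τ}`, where `τ` has
length `k ≥ 1`, is right-justified if and only if the first entry of `τ` is its
largest entry. -/
theorem singleton_rightJustified_iff (k : ℕ) (τ : Equiv.Perm (Fin (k + 1))) :
    RightJustified ({⟨k + 1, τ⟩} : PatternSet) ↔ maxPos τ = 0 := by
  constructor
  · -- right-justified implies τ starts with max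
    intro hRJ
    by_contra hM
    set M := maxPos τ with hMdef
    have hMv : ((M - 1 : Fin (k+1)) : ℕ) = (M : ℕ) - 1 := by
      rw [Fin.coe_sub_one, if_neg hM]
    have hM0 : (M : ℕ) ≠ 0 := fun h => hM (Fin.ext h)
    have hMne : M - 1 ≠ M := by
      intro h
      have := congrArg Fin.val h
      rw [hMv] at this; omega
    set α := moveLeft τ with hα
    have hmp : maxPos α = M - 1 := by
      simp only [maxPos, hα, moveLeft, mul_inv_rev, Equiv.Perm.mul_apply, swap_inv]
      rw [← maxPos, ← hMdef, swap_apply_left]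
    have hmlast : maxPos α ≠ Fin.last k := by
      rw [hmp]
      intro h
      have := congrArg Fin.val h
      rw [hMv, Fin.val_last] at this
      have := M.isLt
      omega
    have havoid : AvoidsSet α ({⟨k + 1, τ⟩} : PatternSet) := by
      intro p hp
      rw [Set.mem_singleton_iff] at hp; subst hp
      rintro ⟨f, hf, hpat⟩
      have hfid : f = id := strictMono_fin_eq_id hf
      subst hfid
      simp only [id] at hpat
      have hsm : StrictMono (fun x => α (τ⁻¹ x)) := by
        intro x y hxy
        have : τ (τ⁻¹ x) < τ (τ⁻¹ y) := by simpa using hxy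
        exact (hpat _ _).mp this
      have hid := strictMono_fin_eq_id hsm
      have hατ : α = τ := Equiv.ext fun i => by
        have := congrFun hid (τ i)
        simpa using this
      have hswap : Equiv.swap M (M - 1) = 1 := by
        have : τ * Equiv.swap M (M - 1) = τ * 1 := by
          rw [mul_one, ← hMdef] at *
          exact hατ
        exact mul_left_cancel this
      exact hMne (swap_eq_one_iff.mp hswap).symm
    have hmr : moveRight α = τ := by
      rw [moveRight, hmp, hα, moveLeft, sub_add_cancel, mul_assoc,
        swap_comm (M - 1) M, ← hMdef, swap_mul_self, mul_one]
    have := hRJ k α havoid hmlast ⟨k + 1, τ⟩ rfl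
    rw [hmr] at this
    exact this ⟨id, strictMono_id, fun a b => Iff.rfl⟩
  · -- τ starts with max implies right-justified
    intro hτ0 n α hα hm p hp
    rw [Set.mem_singleton_iff] at hp; subst hp
    rintro ⟨f, hf, hpat⟩
    set m := maxPos α with hmdef
    set β := moveRight α with hβ
    have hmn : (m : ℕ) < n := by
      have h1 := m.isLt
      have h2 : (m : ℕ) ≠ n := fun h => hm (Fin.ext (by simp [h]))
      omega
    have hm1 : ((m + 1 : Fin (n+1)) : ℕ) = (m : ℕ) + 1 := by
      rw [Fin.val_add_one, if_neg hm]
    have hmne : m ≠ m + 1 := by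
      intro h; have := congrArg Fin.val h; omega
    have hαm : α m = Fin.last n := by
      simp [hmdef, maxPos]
    have hβm1 : β (m + 1) = Fin.last n := by
      rw [hβ, moveRight, ← hmdef, Equiv.Perm.mul_apply, swap_apply_right, hαm]
    have hβm : β m = α (m + 1) := by
      rw [hβ, moveRight, ← hmdef, Equiv.Perm.mul_apply, swap_apply_left]
    have hβeq : ∀ x, x ≠ m → x ≠ m + 1 → β x = α x := by
      intro x h1 h2
      rw [hβ, moveRight, ← hmdef, Equiv.Perm.mul_apply, swap_apply_of_ne_of_ne h1 h2]
    have hτ0top : τ 0 = Fin.last k := by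
      have : τ (τ⁻¹ (Fin.last k)) = Fin.last k := Equiv.apply_symm_apply _ _
      rwa [show τ⁻¹ (Fin.last k) = 0 from hτ0] at this
    by_cases hA : ∃ a, f a = m + 1
    · obtain ⟨a0, ha0⟩ := hA
      have hmax : ∀ b, τ b ≤ τ a0 := by
        intro b
        rcases eq_or_ne b a0 with rfl | hb
        · exact le_rfl
        · have hne : β (f b) ≠ Fin.last n := by
            rw [← hβm1, ← ha0]
            exact fun h => hb (hf.injective (β.injective h))
          have : β (f b) < β (f a0) := by
            rw [ha0, hβm1]
            exact lt_of_le_of_ne (Fin.le_last _) hne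
          exact le_of_lt ((hpat b a0).mpr this)
      have ha0top : τ a0 = Fin.last k := by
        have h1 := hmax (τ⁻¹ (Fin.last k))
        rw [show τ (τ⁻¹ (Fin.last k)) = Fin.last k from Equiv.apply_symm_apply _ _] at h1
        exact le_antisymm (Fin.le_last _) h1
      have ha00 : a0 = 0 := by
        have : τ⁻¹ (Fin.last k) = a0 := by
          rw [← ha0top, show τ⁻¹ (τ a0) = a0 from Equiv.symm_apply_apply _ _]
        exact this.symm.trans hτ0
      subst ha00
      have hfb : ∀ b : Fin (k+1), b ≠ 0 → m + 1 < f b := by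
        intro b hb
        rw [← ha0]
        exact hf (Fin.pos_of_ne_zero hb)
      set g : Fin (k+1) → Fin (n+1) := fun x => if x = 0 then m else f x with hg
      apply hα ⟨k + 1, τ⟩ rfl
      have hgval : ∀ x, x ≠ 0 → g x = f x := by
        intro x hx; simp [hg, hx]
      have hmlt : m < m + 1 := by
        rw [Fin.lt_def]; omega
      refine ⟨g, ?_, ?_⟩
      · intro x y hxy
        rcases eq_or_ne x 0 with rfl | hx
        · have hy : y ≠ 0 := Fin.pos_iff_ne_zero.mp hxy
          rw [hgval y hy]
          simp only [hg, if_pos rfl]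
          exact lt_trans hmlt (hfb y hy)
        · have hy : y ≠ 0 := Fin.pos_iff_ne_zero.mp (lt_trans (Fin.pos_of_ne_zero hx) hxy)
          rw [hgval x hx, hgval y hy]
          exact hf hxy
      · intro x y
        have hαne : ∀ z : Fin (k+1), z ≠ 0 → α (g z) ≠ Fin.last n := by
          intro z hz h
          rw [← hαm] at h
          have := α.injective h
          rw [hgval z hz] at this
          exact absurd this (ne_of_gt (lt_trans hmlt (hfb z hz)))
        have hτne : ∀ z : Fin (k+1), z ≠ 0 → τ z ≠ Fin.last k := by
          intro z hz h
          rw [← hτ0top] at h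
          exact hz (τ.injective h)
        rcases eq_or_ne x 0 with rfl | hx <;> rcases eq_or_ne y 0 with rfl | hy
        · simp
        · constructor
          · intro h; exact absurd h ((not_lt.mpr (Fin.le_last _)) ∘ (hτ0top ▸ ·))
          · intro h
            simp only [hg, if_pos rfl] at h
            rw [hαm] at h
            exact absurd h (not_lt.mpr (Fin.le_last _))
        · constructor
          · intro _
            simp only [hg, if_pos rfl]
            rw [hαm]
            exact lt_of_le_of_ne (Fin.le_last _) (hαne x hx)
          · intro _
            rw [hτ0top]
            exact lt_of_le_of_ne (Fin.le_last _) (hτne x hx)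
        · rw [hgval x hx, hgval y hy]
          rw [hpat x y]
          have hfx := hfb x hx
          have hfy := hfb y hy
          rw [hβeq (f x) (ne_of_gt (lt_trans hmlt hfx)) (ne_of_gt hfx),
            hβeq (f y) (ne_of_gt (lt_trans hmlt hfy)) (ne_of_gt hfy)]
    · push_neg at hA
      set g : Fin (k+1) → Fin (n+1) := fun x => if f x = m then m + 1 else f x with hg
      have hval : ∀ x, α (g x) = β (f x) := by
        intro x
        by_cases h : f x = m
        · simp only [hg, if_pos h, h, hβm]
        · simp only [hg, if_neg h]
          exact (hβeq (f x) h (hA x)).symm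
      apply hα ⟨k + 1, τ⟩ rfl
      refine ⟨g, ?_, fun a b => (hpat a b).trans (by rw [hval, hval])⟩
      intro x y hxy
      have hfxy := hf hxy
      have hvne : ∀ a b : Fin (n+1), a ≠ b → (a : ℕ) ≠ (b : ℕ) :=
        fun a b h hv => h (Fin.ext hv)
      by_cases hx : f x = m <;> by_cases hy : f y = m
      · exact absurd (hx.trans hy.symm) (ne_of_lt hfxy)
      · simp only [hg, if_pos hx, if_neg hy]
        have h1 : (m : ℕ) < (f y : ℕ) := by rw [← hx]; exact hfxy
        have h2 := hvne _ _ (hA y)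
        rw [Fin.lt_def]
        omega
      · simp only [hg, if_neg hx, if_pos hy]
        rw [Fin.lt_def]
        have : (f x : ℕ) < (m : ℕ) := by rw [← hy]; exact hfxy
        omega
      · simp only [hg, if_neg hx, if_neg hy]
        exact hfxy
end

section
/- Let P be a right-justified set of forbidden patterns, let α∈S_n(P), and let i with 2≤i≤n+1 be an active site of α. Then every site j with 1≤j<i is also an active site of α; consequently the active sites of any permutation in S(P) form an (possibly empty) interval of integers {1,2,...,k}. -/
open Equiv

lemma liftL_apply {n : ℕ} (α : Equiv.Perm (Fin n)) (y : Fin (n + 1)) :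
    (finSuccEquivLast.permCongr.symm α.optionCongr) y =
      if h : (y : ℕ) < n then (α ⟨y, h⟩).castSucc else Fin.last n := by
  rcases Fin.eq_castSucc_or_eq_last y with ⟨z, rfl⟩ | rfl
  · rw [dif_pos (by simpa using z.isLt)]
    simp only [Equiv.permCongr_symm, Equiv.permCongr_apply, Equiv.symm_symm,
      finSuccEquivLast_castSucc, Equiv.optionCongr_apply, Option.map_some,
      finSuccEquivLast_symm_some]
    congr 1
  · rw [dif_neg (by simp)]
    simp only [Equiv.permCongr_symm, Equiv.permCongr_apply, Equiv.symm_symm,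
      finSuccEquivLast_last, Equiv.optionCongr_apply, Option.map_none,
      finSuccEquivLast_symm_none]

lemma insertMax_apply {n : ℕ} (α : Equiv.Perm (Fin n)) (i : ℕ) (x : Fin (n + 1)) :
    insertMax α i x =
      if h : (x : ℕ) < n - (i - 1) then (α ⟨x, by omega⟩).castSucc
      else if h2 : (x : ℕ) = n - (i - 1) then Fin.last n
      else (α ⟨(x : ℕ) - 1, by have := x.isLt; omega⟩).castSucc := by
  set m : ℕ := n - (i - 1) with hm
  have hmn : m ≤ n := by omega
  set pos : Fin (n + 1) := ⟨m, by omega⟩ with hpos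
  have hrev : ∀ y : Fin (n+1), ((Fin.rev y : Fin (n+1)) : ℕ) = n - y := by
    intro y; rw [Fin.val_rev]; omega
  simp only [insertMax, Equiv.Perm.mul_apply, Fin.revPerm_apply]
  have key : Fin.rev (Fin.cycleRange (Fin.rev pos) (Fin.rev x)) =
      if h : (x : ℕ) < m then x
      else if h2 : (x : ℕ) = m then Fin.last n
      else ⟨(x : ℕ) - 1, by have := x.isLt; omega⟩ := by
    rcases lt_trichotomy (x : ℕ) m with hlt | heq | hgt
    · rw [dif_pos hlt]
      have : Fin.rev pos < Fin.rev x := by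
        rw [Fin.lt_def, hrev, hrev]; simp only [hpos]; omega
      rw [Fin.cycleRange_of_gt this, Fin.rev_rev]
    · rw [dif_neg (by omega), dif_pos heq]
      have : Fin.rev x = Fin.rev pos := by
        rw [Fin.rev_inj]; exact Fin.ext heq
      rw [Fin.cycleRange_of_eq this, Fin.rev_zero]
    · rw [dif_neg (by omega), dif_neg (by omega)]
      have hxlt := x.isLt
      have hx1 : 1 ≤ (x : ℕ) := by omega
      have : Fin.rev x < Fin.rev pos := by
        rw [Fin.lt_def, hrev, hrev]; simp only [hpos]; omega
      rw [Fin.cycleRange_of_lt this]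
      have hval : ((Fin.rev x + 1 : Fin (n+1)) : ℕ) = n - (x : ℕ) + 1 := by
        rw [Fin.val_add_one_of_lt]
        · rw [hrev]
        · rw [Fin.lt_def, hrev, Fin.val_last]; omega
      apply Fin.ext
      simp only [hrev, hval]
      omega
  rw [key]
  split_ifs with h h2
  · rw [liftL_apply, dif_pos (by omega : (x : ℕ) < n)]
  · rw [liftL_apply, dif_neg (by simp)]
  · have hlt : (x : ℕ) - 1 < n := by have := x.isLt; omega
    rw [liftL_apply]
    exact dif_pos hlt

lemma insertMax_apply_val {n : ℕ} (α : Equiv.Perm (Fin n)) (i v : ℕ) (hv : v < n + 1) :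
    insertMax α i ⟨v, hv⟩ =
      if h : v < n - (i - 1) then (α ⟨v, by omega⟩).castSucc
      else if h2 : v = n - (i - 1) then Fin.last n
      else (α ⟨v - 1, by omega⟩).castSucc :=
  insertMax_apply α i ⟨v, hv⟩

lemma maxPos_insertMax {n : ℕ} (α : Equiv.Perm (Fin n)) (i : ℕ) :
    maxPos (insertMax α i) = ⟨n - (i - 1), by omega⟩ := by
  have hx : insertMax α i (⟨n - (i - 1), by omega⟩ : Fin (n + 1)) = Fin.last n := by
    rw [insertMax_apply_val]
    rw [dif_neg (by omega), dif_pos rfl]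
  rw [maxPos, Equiv.Perm.inv_eq_iff_eq]
  exact hx.symm

lemma moveRight_insertMax {n : ℕ} (α : Equiv.Perm (Fin n)) {i : ℕ}
    (hi1 : 2 ≤ i) (hi2 : i ≤ n + 1) :
    moveRight (insertMax α i) = insertMax α (i - 1) := by
  have hn : 1 ≤ n := by omega
  set m : ℕ := n - (i - 1) with hm
  have hmn : m + 1 ≤ n := by omega
  have hm' : n - (i - 1 - 1) = m + 1 := by omega
  apply Equiv.ext
  intro x
  obtain ⟨v, hv⟩ := x
  rw [moveRight, Equiv.Perm.mul_apply, maxPos_insertMax]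
  have hpos1 : ((⟨m, by omega⟩ : Fin (n + 1)) + 1) = (⟨m + 1, by omega⟩ : Fin (n + 1)) := by
    apply Fin.ext
    rw [Fin.val_add_one_of_lt (by rw [Fin.lt_def, Fin.val_last]; exact Nat.lt_of_lt_of_le (Nat.lt_succ_self m) hmn)]
  rw [hpos1]
  by_cases h1 : v = m
  · have hxx : (⟨v, hv⟩ : Fin (n + 1)) = ⟨m, by omega⟩ := Fin.ext h1
    rw [hxx, Equiv.swap_apply_left, insertMax_apply_val, insertMax_apply_val]
    split_ifs <;>
      first
        | rfl
        | (exfalso; omega)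
        | (exact congrArg Fin.castSucc (congrArg α (Fin.ext (by simp; omega))))
  · by_cases h2 : v = m + 1
    · have hxx : (⟨v, hv⟩ : Fin (n + 1)) = ⟨m + 1, by omega⟩ := Fin.ext h2
      rw [hxx, Equiv.swap_apply_right, insertMax_apply_val, insertMax_apply_val]
      split_ifs <;>
        first
          | rfl
          | (exfalso; omega)
          | (exact congrArg Fin.castSucc (congrArg α (Fin.ext (by simp; omega))))
    · rw [Equiv.swap_apply_of_ne_of_ne
        (Fin.ne_of_val_ne h1) (Fin.ne_of_val_ne h2)]
      rw [insertMax_apply_val, insertMax_apply_val]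
      split_ifs <;>
        first
          | rfl
          | (exfalso; omega)
          | (exact congrArg Fin.castSucc (congrArg α (Fin.ext (by simp; omega))))

/-- For a right-justified set of forbidden patterns `P` and
`α ∈ S_n(P)`: if site `i` (with `2 ≤ i ≤ n+1`) of `α` is active then so is every site
`j` with `1 ≤ j < i`; consequently, the active sites of `α` form a (possibly empty)
interval `{1, 2, …, k}`. -/
theorem activeSites_interval (P : PatternSet) (hP : RightJustified P) {n : ℕ}
    (α : Equiv.Perm (Fin n)) (hα : AvoidsSet α P) :
    (∀ i : ℕ, 2 ≤ i → i ≤ n + 1 → AvoidsSet (insertMax α i) P →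
      ∀ j : ℕ, 1 ≤ j → j < i → AvoidsSet (insertMax α j) P) ∧
    ∃ k : ℕ, ∀ j : ℕ, ActiveSite P α j ↔ 1 ≤ j ∧ j ≤ k := by
  classical
  have step : ∀ t : ℕ, 2 ≤ t → t ≤ n + 1 → AvoidsSet (insertMax α t) P →
      AvoidsSet (insertMax α (t - 1)) P := by
    intro t ht2 htn hAv
    have hne : maxPos (insertMax α t) ≠ Fin.last n := by
      rw [maxPos_insertMax]
      intro hc
      have := congrArg Fin.val hc
      simp only [Fin.val_last] at this
      omega
    have := hP n (insertMax α t) hAv hne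
    rwa [moveRight_insertMax α ht2 htn] at this
  have desc : ∀ d t : ℕ, 1 ≤ t → t + d ≤ n + 1 → AvoidsSet (insertMax α (t + d)) P →
      AvoidsSet (insertMax α t) P := by
    intro d
    induction d with
    | zero => intro t _ _ h; simpa using h
    | succ d ih =>
      intro t ht1 hle h
      have hstep := step (t + (d + 1)) (by omega) (by omega) h
      have heq : t + (d + 1) - 1 = t + d := by omega
      rw [heq] at hstep
      exact ih t ht1 (by omega) hstep
  have part1 : ∀ i : ℕ, 2 ≤ i → i ≤ n + 1 → AvoidsSet (insertMax α i) P →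
      ∀ j : ℕ, 1 ≤ j → j < i → AvoidsSet (insertMax α j) P := by
    intro i hi2 hin hAv j hj1 hji
    have heq : j + (i - j) = i := by omega
    exact desc (i - j) j hj1 (by omega) (by rw [heq]; exact hAv)
  refine ⟨part1, ?_⟩
  set k : ℕ := Nat.findGreatest (fun j => ActiveSite P α j) (n + 1) with hk
  refine ⟨k, fun j => ⟨?_, ?_⟩⟩
  · intro hj
    obtain ⟨hj1, hj2, hjA⟩ := hj
    exact ⟨hj1, Nat.le_findGreatest hj2 ⟨hj1, hj2, hjA⟩⟩
  · rintro ⟨hj1, hjk⟩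
    have hk1 : 1 ≤ k := le_trans hj1 hjk
    have hkA : ActiveSite P α k := by
      have := (Nat.findGreatest_eq_iff.1 hk.symm).2.1
      exact this (by omega)
    have hkn : k ≤ n + 1 := hkA.2.1
    rcases eq_or_lt_of_le hjk with rfl | hjlt
    · exact hkA
    · exact ⟨hj1, by omega, part1 k (by omega) hkn hkA.2.2 j hj1 hjlt⟩
end

section
/- Let p,m≥2 and let P={321, σ_p, σ_m}, where σ_p is the length-(p+1) permutation p (p+1) 1 2 ... (p−1) and σ_m is the length-(m+1) permutation (m+1) 1 2 ... m. If α∈S_n(P) and site k of α is active for some k≥2 (i.e., α^{↓k}∈S_{n+1}(P)), then the last k−1 entries of α are increasing, i.e., α(n−k+2)<α(n−k+3)<...<α(n), and moreover k≤m. -/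
open Equiv

section InsertMaxEval
variable {n : ℕ} (α : Equiv.Perm (Fin n)) (k : ℕ)

lemma L_castSucc (y : Fin n) :
    (finSuccEquivLast.permCongr.symm α.optionCongr) y.castSucc = (α y).castSucc := by
  simp [Equiv.permCongr, Equiv.optionCongr]

lemma L_last :
    (finSuccEquivLast.permCongr.symm α.optionCongr) (Fin.last n) = Fin.last n := by
  simp [Equiv.permCongr, Equiv.optionCongr]

lemma insertMax_at : insertMax α k ⟨n - (k - 1), by omega⟩ = Fin.last n := by
  rw [insertMax]
  simp only [Perm.mul_apply, Fin.revPerm_apply, Fin.cycleRange_self, Fin.rev_zero]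
  exact L_last α

lemma insertMax_lt (x : Fin (n + 1)) (hx : (x : ℕ) < n - (k - 1)) :
    insertMax α k x = (α ⟨x, by omega⟩).castSucc := by
  rw [insertMax]
  have h : (⟨n - (k-1), by omega⟩ : Fin (n+1)).rev < x.rev :=
    Fin.rev_lt_rev.mpr (Fin.lt_def.mpr hx)
  simp only [Perm.mul_apply, Fin.revPerm_apply, Fin.cycleRange_of_gt h, Fin.rev_rev]
  have hxl : x ≠ Fin.last n := by
    intro h'; rw [h'] at hx; simp at hx; omega
  obtain ⟨y, rfl⟩ := Fin.exists_castSucc_eq.mpr hxl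
  rw [L_castSucc]
  congr 1

lemma insertMax_gt (x : Fin (n + 1)) (hx : n - (k - 1) < (x : ℕ)) :
    insertMax α k x = (α ⟨(x : ℕ) - 1, by omega⟩).castSucc := by
  rw [insertMax]
  have h : x.rev < (⟨n - (k-1), by omega⟩ : Fin (n+1)).rev :=
    Fin.rev_lt_rev.mpr (Fin.lt_def.mpr hx)
  have h3 : ((Fin.rev x + 1 : Fin (n+1)) : ℕ) = n - (x : ℕ) + 1 := by
    rw [Fin.add_def]
    simp [Fin.val_rev]
    simp only [Fin.lt_def, Fin.val_zero]
    omega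
  have h4 : (Fin.rev x + 1).rev = ((⟨(x : ℕ) - 1, by omega⟩ : Fin n).castSucc) := by
    ext
    rw [Fin.val_rev, h3]
    simp
    omega
  simp only [Perm.mul_apply, Fin.revPerm_apply, Fin.cycleRange_of_lt h, h4, L_castSucc]
end InsertMaxEval

lemma contains_321 {N : ℕ} (π : Perm (Fin N)) (x y z : Fin N) (hxy : x < y) (hyz : y < z)
    (h1 : π y < π x) (h2 : π z < π y) : Contains perm321 π := by
  have h3 : π z < π x := h2.trans h1
  refine ⟨![x, y, z], ?_, ?_⟩
  · intro a b hab
    fin_cases a <;> fin_cases b <;>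
      first
        | exact absurd hab (by decide)
        | simpa using hxy
        | simpa using hyz
        | simpa using hxy.trans hyz
  · intro a b
    fin_cases a <;> fin_cases b <;>
      simp [perm321, h1, h2, h3, not_lt.mpr h1.le, not_lt.mpr h2.le, not_lt.mpr h3.le]

lemma sigmaM_eq {m : ℕ} (i : Fin (m + 1)) : sigmaM m i = i - 1 := by
  rw [sigmaM, Equiv.Perm.inv_def, Equiv.symm_apply_eq, finRotate_succ_apply, sub_add_cancel]

lemma sigmaM_zero {m : ℕ} : sigmaM m 0 = Fin.last m := by
  rw [sigmaM_eq]
  ext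
  rw [Fin.coe_sub_one, if_pos rfl, Fin.val_last]

lemma sigmaM_val {m : ℕ} (i : Fin (m + 1)) (hi : i ≠ 0) : (sigmaM m i : ℕ) = (i : ℕ) - 1 := by
  rw [sigmaM_eq, Fin.coe_sub_one, if_neg hi]

lemma contains_sigmaM {N m : ℕ} (π : Perm (Fin N)) (f : Fin (m + 1) → Fin N)
    (hf : StrictMono f)
    (hmax : ∀ i : Fin (m + 1), i ≠ 0 → π (f i) < π (f 0))
    (hinc : ∀ i j : Fin (m + 1), i ≠ 0 → i < j → π (f i) < π (f j)) :
    Contains (sigmaM m) π := by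
  refine ⟨f, hf, fun a b => ?_⟩
  rcases eq_or_ne a 0 with rfl | ha <;> rcases eq_or_ne b 0 with rfl | hb
  · simp
  · rw [sigmaM_zero]
    constructor
    · intro h
      exact absurd (Fin.le_last _) (not_le.mpr h)
    · intro h
      exact absurd (hmax b hb) (not_lt.mpr h.le)
  · rw [sigmaM_zero]
    have h1 := sigmaM_val a ha
    have ha' : (a : ℕ) ≠ 0 := fun h => ha (Fin.ext h)
    have hl : sigmaM m a < Fin.last m := by
      rw [Fin.lt_def, h1, Fin.val_last]
      have := a.isLt; omega
    exact ⟨fun _ => hmax a ha, fun _ => hl⟩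
  · have h1 := sigmaM_val a ha
    have h2 := sigmaM_val b hb
    have ha' : (a : ℕ) ≠ 0 := fun h => ha (Fin.ext h)
    have hb' : (b : ℕ) ≠ 0 := fun h => hb (Fin.ext h)
    rw [Fin.lt_def, h1, h2]
    constructor
    · intro h
      exact hinc a b ha (Fin.lt_def.mpr (by omega))
    · intro h
      by_contra hcon
      rcases lt_trichotomy a b with h' | h' | h'
      · exact hcon (by have := Fin.lt_def.mp h'; omega)
      · subst h'; exact lt_irrefl _ h
      · exact absurd (hinc b a hb h') (not_lt.mpr h.le)

set_option maxHeartbeats 1000000 in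
/-- For `p, m ≥ 2` and `P = {321, p(p+1)12…(p-1), (m+1)12…m}` : if
`α ∈ S_n(P)` and site `k` of `α` is active for some `k ≥ 2`, then the last `k − 1`
entries of `α` are increasing, and moreover `k ≤ m`. -/
theorem suffix_increasing_of_active (p m : ℕ) (hp : 2 ≤ p) (hm : 2 ≤ m) (P : PatternSet)
    (hP : P = {⟨3, perm321⟩, ⟨p + 1, sigmaP p⟩, ⟨m + 1, sigmaM m⟩})
    {n : ℕ} (α : Equiv.Perm (Fin n)) (hα : AvoidsSet α P)
    (k : ℕ) (hk2 : 2 ≤ k) (hkn : k ≤ n + 1)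
    (hact : AvoidsSet (insertMax α k) P) :
    (∀ a b : Fin n, n - (k - 1) ≤ (a : ℕ) → a < b → α a < α b) ∧ k ≤ m := by
  subst hP
  have part1 : ∀ a b : Fin n, n - (k - 1) ≤ (a : ℕ) → a < b → α a < α b := by
    intro a b ha hab
    by_contra hcon
    push_neg at hcon
    have hne : α a ≠ α b := fun h => hab.ne (α.injective h)
    have hba : α b < α a := lt_of_le_of_ne hcon fun h => hne h.symm
    have hb1 : (b : ℕ) < n := b.isLt
    have ha1 : (a : ℕ) < (b : ℕ) := hab
    have hc : Contains perm321 (insertMax α k) := by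
      apply contains_321 _ (⟨n - (k - 1), by omega⟩ : Fin (n + 1))
        ⟨(a : ℕ) + 1, by omega⟩ ⟨(b : ℕ) + 1, by omega⟩
      · exact Fin.lt_def.mpr (by simp; omega)
      · exact Fin.lt_def.mpr (by simp; omega)
      · rw [insertMax_at, insertMax_gt _ _ _ (by simp; omega)]
        exact Fin.castSucc_lt_last _
      · rw [insertMax_gt _ _ _ (by simp; omega), insertMax_gt _ _ _ (by simp; omega)]
        rw [Fin.castSucc_lt_castSucc_iff]
        have e1 : (⟨((⟨(a : ℕ) + 1, by omega⟩ : Fin (n+1)) : ℕ) - 1, by omega⟩ : Fin n) = a :=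
          Fin.ext (by simp)
        have e2 : (⟨((⟨(b : ℕ) + 1, by omega⟩ : Fin (n+1)) : ℕ) - 1, by omega⟩ : Fin n) = b :=
          Fin.ext (by simp)
        rw [e1, e2]
        exact hba
    exact hact ⟨3, perm321⟩ (Set.mem_insert _ _) hc
  refine ⟨part1, ?_⟩
  by_contra hkm
  push_neg at hkm
  have hc : Contains (sigmaM m) (insertMax α k) := by
    apply contains_sigmaM _ (fun i : Fin (m + 1) => (⟨n - (k - 1) + (i : ℕ), by
      have := i.isLt; omega⟩ : Fin (n + 1)))
    · intro i j hij
      exact Fin.lt_def.mpr (by simp; exact hij)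
    · intro i hi
      have hi' : 0 < (i : ℕ) := Nat.pos_of_ne_zero fun h => hi (Fin.ext h)
      have hf0 : (⟨n - (k - 1) + ((0 : Fin (m+1)) : ℕ), by omega⟩ : Fin (n + 1))
          = ⟨n - (k - 1), by omega⟩ := Fin.ext (by simp)
      rw [hf0, insertMax_at, insertMax_gt _ _ _ (by simp; simp only [Fin.lt_def, Fin.val_zero]; omega)]
      exact Fin.castSucc_lt_last _
    · intro i j hi hij
      have hi' : 0 < (i : ℕ) := Nat.pos_of_ne_zero fun h => hi (Fin.ext h)
      have hij' : (i : ℕ) < (j : ℕ) := hij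
      have hjm : (j : ℕ) < m + 1 := j.isLt
      rw [insertMax_gt _ _ _ (by simp; simp only [Fin.lt_def, Fin.val_zero]; omega), insertMax_gt _ _ _ (by simp; simp only [Fin.lt_def, Fin.val_zero]; omega)]
      rw [Fin.castSucc_lt_castSucc_iff]
      apply part1
      · simp; omega
      · exact Fin.lt_def.mpr (by simp; omega)
  exact hact ⟨m + 1, sigmaM m⟩
    (Set.mem_insert_iff.mpr (Or.inr (Set.mem_insert_iff.mpr (Or.inr rfl)))) hc
end

section
/- Let p≥2 and P={312, 2431, δ} where δ is the length-(p+1) decreasing permutation (p+1)p...21. If α∈S_n(P) has exactly k active sites and β=α^{↓i}∈S_{n+1}(P) for some i with 1≤i≤k, then β has either i or i+1 active sites. -/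
open Equiv

-- ===================== insertMax pointwise description =====================

lemma IM_A_castSucc {m : ℕ} (γ : Equiv.Perm (Fin m)) (j : Fin m) :
    (finSuccEquivLast.permCongr.symm (optionCongr γ)) (Fin.castSucc j) = Fin.castSucc (γ j) := by
  simp [Equiv.permCongr_apply]

lemma IM_A_last {m : ℕ} (γ : Equiv.Perm (Fin m)) :
    (finSuccEquivLast.permCongr.symm (optionCongr γ)) (Fin.last m) = Fin.last m := by
  simp [Equiv.permCongr_apply]

lemma insertMax_apply_lt {m : ℕ} (γ : Equiv.Perm (Fin m)) (s : ℕ) (x : Fin (m+1))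
    (h : (x : ℕ) < m - (s-1)) :
    insertMax γ s x = Fin.castSucc (γ ⟨x, by have := x.isLt; omega⟩) := by
  have hx : x < (⟨m - (s - 1), by omega⟩ : Fin (m+1)) := by
    rw [Fin.lt_def]; exact h
  have h1 : Fin.rev (⟨m - (s - 1), by omega⟩ : Fin (m+1)) < Fin.rev x := Fin.rev_lt_rev.2 hx
  simp only [insertMax, Equiv.Perm.mul_apply, Fin.revPerm_apply]
  rw [Fin.cycleRange_of_gt h1, Fin.rev_rev]
  exact IM_A_castSucc γ ⟨x, by have := x.isLt; omega⟩

lemma insertMax_apply_self {m : ℕ} (γ : Equiv.Perm (Fin m)) (s : ℕ) (x : Fin (m+1))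
    (hx : (x : ℕ) = m - (s-1)) :
    insertMax γ s x = Fin.last m := by
  have hx' : x = (⟨m - (s - 1), Nat.lt_succ_of_le (Nat.sub_le m (s-1))⟩ : Fin (m+1)) :=
    Fin.ext hx
  subst hx'
  simp only [insertMax, Equiv.Perm.mul_apply, Fin.revPerm_apply]
  rw [Fin.cycleRange_of_eq rfl]
  have h0 : Fin.rev (0 : Fin (m+1)) = Fin.last m := by
    apply Fin.ext; rw [Fin.val_rev]; simp
  rw [h0]
  exact IM_A_last γ

lemma insertMax_apply_succ {m : ℕ} (γ : Equiv.Perm (Fin m)) (s : ℕ) (y : Fin m)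
    (hy : m - (s-1) ≤ (y : ℕ)) :
    insertMax γ s (Fin.succ y) = Fin.castSucc (γ y) := by
  have hx : (⟨m - (s - 1), by omega⟩ : Fin (m+1)) < Fin.succ y := by
    rw [Fin.lt_def]; simp only [Fin.val_succ]; omega
  have h1 : Fin.rev (Fin.succ y) < Fin.rev (⟨m - (s - 1), by omega⟩ : Fin (m+1)) :=
    Fin.rev_lt_rev.2 hx
  simp only [insertMax, Equiv.Perm.mul_apply, Fin.revPerm_apply]
  rw [Fin.cycleRange_of_lt h1]
  have hlt : Fin.rev (Fin.succ y) < Fin.last m := lt_of_lt_of_le h1 (Fin.le_last _)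
  have hv : (Fin.rev (Fin.succ y) + 1 : Fin (m+1)) = Fin.rev (Fin.castSucc y) := by
    apply Fin.ext
    rw [Fin.val_add_one_of_lt hlt, Fin.val_rev, Fin.val_rev, Fin.val_succ, Fin.coe_castSucc]
    omega
  rw [hv, Fin.rev_rev]
  exact IM_A_castSucc γ y

lemma insertMax_apply_gt {m : ℕ} (γ : Equiv.Perm (Fin m)) (s : ℕ) (x : Fin (m+1))
    (h : m - (s-1) < (x : ℕ)) :
    insertMax γ s x = Fin.castSucc (γ ⟨(x : ℕ) - 1, by have := x.isLt; omega⟩) := by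
  have hx : x = Fin.succ ⟨(x : ℕ) - 1, by have := x.isLt; omega⟩ := by
    apply Fin.ext; rw [Fin.val_succ]; simp only []; omega
  conv_lhs => rw [hx]
  rw [insertMax_apply_succ γ s _ (by simp only []; omega)]

lemma insertMax_eq_castSucc_of_ne {m : ℕ} (γ : Equiv.Perm (Fin m)) (s : ℕ) (x : Fin (m+1))
    (hx : (x : ℕ) ≠ m - (s-1)) :
    ∃ y : Fin m, insertMax γ s x = Fin.castSucc (γ y) ∧
      (((x : ℕ) < m - (s-1) ∧ (y : ℕ) = (x : ℕ)) ∨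
        (m - (s-1) < (x : ℕ) ∧ (y : ℕ) + 1 = (x : ℕ))) := by
  rcases lt_or_gt_of_ne hx with h | h
  · exact ⟨⟨x, by have := x.isLt; omega⟩, insertMax_apply_lt γ s x h, Or.inl ⟨h, rfl⟩⟩
  · refine ⟨⟨(x : ℕ) - 1, by have := x.isLt; omega⟩, insertMax_apply_gt γ s x h,
      Or.inr ⟨h, ?_⟩⟩
    simp only []
    omega

-- ===================== explicit containment lemmas =====================

lemma contains312_iff {m : ℕ} (γ : Equiv.Perm (Fin m)) :
    Contains perm312 γ ↔ ∃ x y z : Fin m, x < y ∧ y < z ∧ γ y < γ z ∧ γ z < γ x := by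
  constructor
  · rintro ⟨f, hmono, hiff⟩
    exact ⟨f 0, f 1, f 2, hmono (by decide), hmono (by decide),
      (hiff 1 2).1 (by decide), (hiff 2 0).1 (by decide)⟩
  · rintro ⟨x, y, z, hxy, hyz, h1, h2⟩
    have h3 : γ y < γ x := h1.trans h2
    refine ⟨![x, y, z], ?_, ?_⟩
    · intro a b hab
      fin_cases a <;> fin_cases b <;>
        first
        | exact absurd hab (by decide)
        | simpa using hxy
        | simpa using hyz
        | simpa using hxy.trans hyz
    · intro a b
      fin_cases a <;> fin_cases b <;>
        simp only [Matrix.cons_val_zero, Matrix.cons_val_one, Matrix.head_cons,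
          Matrix.cons_val_two, Matrix.tail_cons, Fin.isValue] <;>
        first
        | exact iff_of_false (by decide) (lt_irrefl _)
        | exact iff_of_true (by decide) (by assumption)
        | exact iff_of_false (by decide) (not_lt.2 (le_of_lt (by assumption)))

lemma contains2431_iff {m : ℕ} (γ : Equiv.Perm (Fin m)) :
    Contains perm2431 γ ↔ ∃ w x y z : Fin m, w < x ∧ x < y ∧ y < z ∧
      γ z < γ w ∧ γ w < γ y ∧ γ y < γ x := by
  constructor
  · rintro ⟨f, hmono, hiff⟩
    exact ⟨f 0, f 1, f 2, f 3, hmono (by decide), hmono (by decide), hmono (by decide),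
      (hiff 3 0).1 (by decide), (hiff 0 2).1 (by decide), (hiff 2 1).1 (by decide)⟩
  · rintro ⟨w, x, y, z, hwx, hxy, hyz, h1, h2, h3⟩
    have d1 : γ z < γ y := h1.trans h2
    have d2 : γ z < γ x := d1.trans h3
    have d3 : γ w < γ x := h2.trans h3
    refine ⟨![w, x, y, z], ?_, ?_⟩
    · intro a b hab
      fin_cases a <;> fin_cases b <;>
        first
        | exact absurd hab (by decide)
        | simpa using hwx
        | simpa using hxy
        | simpa using hyz
        | simpa using hwx.trans hxy
        | simpa using hxy.trans hyz
        | simpa using (hwx.trans hxy).trans hyz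
    · intro a b
      fin_cases a <;> fin_cases b <;>
        simp only [Matrix.cons_val_zero, Matrix.cons_val_one, Matrix.head_cons,
          Matrix.cons_val_two, Matrix.tail_cons, Matrix.cons_val_three, Fin.isValue] <;>
        first
        | exact iff_of_false (by decide) (lt_irrefl _)
        | exact iff_of_true (by decide) (by assumption)
        | exact iff_of_false (by decide) (not_lt.2 (le_of_lt (by assumption)))

-- transfer: an occurrence in `insertMax γ s` missing the inserted maximum gives one in `γ`
lemma contains_of_insertMax_miss {k m : ℕ} {σ : Equiv.Perm (Fin k)} {γ : Equiv.Perm (Fin m)}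
    {s : ℕ} (f : Fin k → Fin (m+1)) (hmono : StrictMono f)
    (hiff : ∀ a b, σ a < σ b ↔ insertMax γ s (f a) < insertMax γ s (f b))
    (hmiss : ∀ a, ((f a) : ℕ) ≠ m - (s-1)) : Contains σ γ := by
  have H : ∀ a, ∃ y : Fin m, insertMax γ s (f a) = Fin.castSucc (γ y) ∧
      ((((f a) : ℕ) < m - (s-1) ∧ (y : ℕ) = ((f a) : ℕ)) ∨
        (m - (s-1) < ((f a) : ℕ) ∧ (y : ℕ) + 1 = ((f a) : ℕ))) :=
    fun a => insertMax_eq_castSucc_of_ne γ s (f a) (hmiss a)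
  choose g hg1 hg2 using H
  refine ⟨g, ?_, ?_⟩
  · intro a b hab
    have h := hmono hab
    rw [Fin.lt_def] at h ⊢
    have h2a := hg2 a; have h2b := hg2 b
    omega
  · intro a b
    rw [hiff a b, hg1 a, hg1 b, Fin.castSucc_lt_castSucc_iff]

-- ===================== inserting to the right of the maximum =====================

lemma avoids_insert_of_le (p : ℕ) (P : PatternSet)
    (hP : P = {⟨3, perm312⟩, ⟨4, perm2431⟩,
      ⟨p + 1, (Fin.revPerm : Equiv.Perm (Fin (p + 1)))⟩})
    {n : ℕ} (α : Equiv.Perm (Fin n)) (i s : ℕ) (hi1 : 1 ≤ i) (hin : i ≤ n + 1)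
    (hs1 : 1 ≤ s) (hsi : s ≤ i)
    (hβ : AvoidsSet (insertMax α i) P) :
    AvoidsSet (insertMax (insertMax α i) s) P := by
  set β := insertMax α i with hβdef
  -- q : position of the new maximum in `insertMax β s`; r : position of the max of β
  have hqr : (n - (i-1)) + 1 ≤ (n+1) - (s-1) := by omega
  have hβr : β ⟨n - (i-1), by omega⟩ = Fin.last n :=
    insertMax_apply_self α i _ rfl
  have hβlt : ∀ y : Fin (n+1), (y : ℕ) ≠ n - (i-1) → β y < Fin.last n := by
    intro y hy
    refine lt_of_le_of_ne (Fin.le_last _) (fun he => hy ?_)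
    have := β.injective (he.trans hβr.symm)
    exact congrArg Fin.val this
  have h312 : ¬ Contains perm312 β := hβ ⟨3, perm312⟩ (by rw [hP]; simp)
  have h2431 : ¬ Contains perm2431 β := hβ ⟨4, perm2431⟩ (by rw [hP]; simp)
  have hrev : ¬ Contains (Fin.revPerm : Equiv.Perm (Fin (p+1))) β :=
    hβ ⟨p + 1, Fin.revPerm⟩ (by rw [hP]; simp)
  intro τ hτ
  rw [hP] at hτ
  simp only [Set.mem_insert_iff, Set.mem_singleton_iff] at hτ
  rcases hτ with rfl | rfl | rfl
  · -- τ = 312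
    intro hcont
    have hcont' : Contains perm312 (insertMax β s) := hcont
    rw [contains312_iff] at hcont'
    obtain ⟨x, y, z, hxy, hyz, h1, h2⟩ := hcont'
    rw [Fin.lt_def] at hxy hyz
    by_cases hyq : (y : ℕ) = (n+1) - (s-1)
    · rw [insertMax_apply_self β s y hyq] at h1
      exact absurd h1 (not_lt.2 (Fin.le_last _))
    by_cases hzq : (z : ℕ) = (n+1) - (s-1)
    · rw [insertMax_apply_self β s z hzq] at h2
      exact absurd h2 (not_lt.2 (Fin.le_last _))
    obtain ⟨y', hy'v, hy'p⟩ := insertMax_eq_castSucc_of_ne β s y hyq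
    obtain ⟨z', hz'v, hz'p⟩ := insertMax_eq_castSucc_of_ne β s z hzq
    rw [hy'v, hz'v, Fin.castSucc_lt_castSucc_iff] at h1
    by_cases hxq : (x : ℕ) = (n+1) - (s-1)
    · -- the occurrence uses the new maximum as the `3`
      apply h312
      rw [contains312_iff]
      refine ⟨⟨n - (i-1), by omega⟩, y', z', ?_, ?_, h1, ?_⟩
      · rw [Fin.lt_def]; simp only []; omega
      · rw [Fin.lt_def]; omega
      · rw [hβr]; exact hβlt z' (by omega)
    · -- the occurrence misses the new maximum
      obtain ⟨x', hx'v, hx'p⟩ := insertMax_eq_castSucc_of_ne β s x hxq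
      rw [hx'v, hz'v, Fin.castSucc_lt_castSucc_iff] at h2
      apply h312
      rw [contains312_iff]
      refine ⟨x', y', z', ?_, ?_, h1, h2⟩
      · rw [Fin.lt_def]; omega
      · rw [Fin.lt_def]; omega
  · -- τ = 2431
    intro hcont
    have hcont' : Contains perm2431 (insertMax β s) := hcont
    rw [contains2431_iff] at hcont'
    obtain ⟨w, x, y, z, hwx, hxy, hyz, h1, h2, h3⟩ := hcont'
    rw [Fin.lt_def] at hwx hxy hyz
    by_cases hwq : (w : ℕ) = (n+1) - (s-1)
    · rw [insertMax_apply_self β s w hwq] at h2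
      exact absurd h2 (not_lt.2 (Fin.le_last _))
    by_cases hyq : (y : ℕ) = (n+1) - (s-1)
    · rw [insertMax_apply_self β s y hyq] at h3
      exact absurd h3 (not_lt.2 (Fin.le_last _))
    by_cases hzq : (z : ℕ) = (n+1) - (s-1)
    · rw [insertMax_apply_self β s z hzq] at h1
      exact absurd h1 (not_lt.2 (Fin.le_last _))
    obtain ⟨w', hw'v, hw'p⟩ := insertMax_eq_castSucc_of_ne β s w hwq
    obtain ⟨y', hy'v, hy'p⟩ := insertMax_eq_castSucc_of_ne β s y hyq
    obtain ⟨z', hz'v, hz'p⟩ := insertMax_eq_castSucc_of_ne β s z hzq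
    rw [hz'v, hw'v, Fin.castSucc_lt_castSucc_iff] at h1
    rw [hw'v, hy'v, Fin.castSucc_lt_castSucc_iff] at h2
    by_cases hxq : (x : ℕ) = (n+1) - (s-1)
    · -- the new maximum plays the role of `4`
      -- here w is left of the new max; y, z are right of it
      rcases lt_trichotomy ((w : ℕ)) (n - (i-1)) with hwr | hwr | hwr
      · -- w left of the max of β : get 2431 in β
        apply h2431
        rw [contains2431_iff]
        refine ⟨w', ⟨n - (i-1), by omega⟩, y', z', ?_, ?_, ?_, h1, h2, ?_⟩
        · rw [Fin.lt_def]; simp only []; omega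
        · rw [Fin.lt_def]; simp only []; omega
        · rw [Fin.lt_def]; omega
        · rw [hβr]; exact hβlt y' (by omega)
      · -- w is the position of the max of β : impossible since γ'(w) < γ'(y)
        have : (w' : ℕ) = n - (i-1) := by omega
        have hwlast : β w' = Fin.last n := by
          rw [show w' = (⟨n - (i-1), by omega⟩ : Fin (n+1)) from Fin.ext this]
          exact hβr
        rw [hwlast] at h2
        exact absurd h2 (not_lt.2 (Fin.le_last _))
      · -- w right of the max of β : get 312 in β
        apply h312
        rw [contains312_iff]
        refine ⟨⟨n - (i-1), by omega⟩, w', y', ?_, ?_, h2, ?_⟩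
        · rw [Fin.lt_def]; simp only []; omega
        · rw [Fin.lt_def]; omega
        · rw [hβr]; exact hβlt y' (by omega)
    · -- the occurrence misses the new maximum
      obtain ⟨x', hx'v, hx'p⟩ := insertMax_eq_castSucc_of_ne β s x hxq
      rw [hy'v, hx'v, Fin.castSucc_lt_castSucc_iff] at h3
      apply h2431
      rw [contains2431_iff]
      refine ⟨w', x', y', z', ?_, ?_, ?_, h1, h2, h3⟩
      · rw [Fin.lt_def]; omega
      · rw [Fin.lt_def]; omega
      · rw [Fin.lt_def]; omega
  · -- τ = decreasing of length p+1
    intro hcont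
    have hcont' : Contains (Fin.revPerm : Equiv.Perm (Fin (p+1))) (insertMax β s) := hcont
    obtain ⟨f, hmono, hiff⟩ := hcont'
    by_cases hq : ∃ a, ((f a) : ℕ) = (n+1) - (s-1)
    · obtain ⟨a0, ha0⟩ := hq
      have hfa0 : insertMax β s (f a0) = Fin.last (n+1) := insertMax_apply_self β s (f a0) ha0
      have ha00 : a0 = 0 := by
        by_contra h0
        have hpos : (0 : Fin (p+1)) < a0 := Fin.pos_of_ne_zero h0
        have hlt : insertMax β s (f a0) < insertMax β s (f 0) := by
          refine (hiff a0 0).1 ?_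
          simp only [Fin.revPerm_apply]
          exact Fin.rev_lt_rev.2 hpos
        rw [hfa0] at hlt
        exact absurd hlt (not_lt.2 (Fin.le_last _))
      subst ha00
      have Hgt : ∀ a : Fin (p+1), a ≠ 0 → (n+1) - (s-1) < ((f a) : ℕ) := by
        intro a ha
        have := hmono (Fin.pos_of_ne_zero ha)
        rw [Fin.lt_def, ha0] at this
        exact this
      have H2 : ∀ a : Fin (p+1), ∃ y : Fin (n+1),
          (a = 0 → (y : ℕ) = n - (i-1)) ∧
          (a ≠ 0 → insertMax β s (f a) = Fin.castSucc (β y) ∧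
            (y : ℕ) + 1 = ((f a) : ℕ)) := by
        intro a
        by_cases h : a = 0
        · exact ⟨⟨n - (i-1), by omega⟩, fun _ => rfl, fun h' => absurd h h'⟩
        · obtain ⟨y, hv, hp'⟩ := insertMax_eq_castSucc_of_ne β s (f a)
            (by have := Hgt a h; omega)
          exact ⟨y, fun h' => absurd h' h, fun _ => ⟨hv, by have := Hgt a h; omega⟩⟩
      choose g hg0 hg1 using H2
      have hg0' : (g 0 : ℕ) = n - (i-1) := hg0 0 rfl
      have hglast : β (g 0) = Fin.last n := insertMax_apply_self α i (g 0) hg0'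
      have hganti : StrictAnti (fun a => β (g a)) := by
        intro a b hab
        have hb0 : b ≠ 0 := by
          intro hb; rw [hb] at hab
          exact absurd hab (not_lt.2 (Fin.zero_le _))
        obtain ⟨hbv, hbp⟩ := hg1 b hb0
        by_cases ha : a = 0
        · subst ha
          show β (g b) < β (g 0)
          rw [hglast]
          refine hβlt (g b) ?_
          have := Hgt b hb0
          omega
        · obtain ⟨hav, hap⟩ := hg1 a ha
          have hlt : insertMax β s (f b) < insertMax β s (f a) := by
            refine (hiff b a).1 ?_
            simp only [Fin.revPerm_apply]
            exact Fin.rev_lt_rev.2 hab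
          rw [hav, hbv, Fin.castSucc_lt_castSucc_iff] at hlt
          exact hlt
      have hgmono : StrictMono g := by
        intro a b hab
        have hb0 : b ≠ 0 := by
          intro hb; rw [hb] at hab
          exact absurd hab (not_lt.2 (Fin.zero_le _))
        obtain ⟨hbv, hbp⟩ := hg1 b hb0
        have hbbig := Hgt b hb0
        rw [Fin.lt_def]
        by_cases ha : a = 0
        · rw [ha, hg0']; omega
        · obtain ⟨hav, hap⟩ := hg1 a ha
          have h := hmono hab
          rw [Fin.lt_def] at h
          omega
      apply hrev
      refine ⟨g, hgmono, fun a b => ?_⟩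
      simp only [Fin.revPerm_apply]
      rw [Fin.rev_lt_rev]
      exact (hganti.lt_iff_gt).symm
    · push_neg at hq
      exact hrev (contains_of_insertMax_miss f hmono hiff hq)

-- ===================== sites at least i+2 are never active =====================

lemma contains312_insert_of_ge {n : ℕ} (α : Equiv.Perm (Fin n)) (i s : ℕ)
    (hi1 : 1 ≤ i) (his : i + 2 ≤ s) (hsn : s ≤ n + 2) :
    Contains perm312 (insertMax (insertMax α i) s) := by
  set β := insertMax α i with hβdef
  have hin : i ≤ n := by omega
  have pfq : (n+1) - (s-1) < n + 2 := by omega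
  have pfy : n - i < n + 1 := by omega
  have pfz : n - (i-1) < n + 1 := by omega
  have hβr : β ⟨n - (i-1), pfz⟩ = Fin.last n := insertMax_apply_self α i _ rfl
  have v1 : insertMax β s (Fin.succ ⟨n - i, pfy⟩) = Fin.castSucc (β ⟨n - i, pfy⟩) :=
    insertMax_apply_succ β s _ (by show (n+1) - (s-1) ≤ n - i; omega)
  have v2 : insertMax β s (Fin.succ ⟨n - (i-1), pfz⟩) = Fin.castSucc (Fin.last n) := by
    rw [insertMax_apply_succ β s _ (by show (n+1) - (s-1) ≤ n - (i-1); omega), hβr]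
  have v0 : insertMax β s ⟨(n+1) - (s-1), pfq⟩ = Fin.last (n+1) :=
    insertMax_apply_self β s _ rfl
  rw [contains312_iff]
  refine ⟨⟨(n+1) - (s-1), pfq⟩, Fin.succ ⟨n - i, pfy⟩,
    Fin.succ ⟨n - (i-1), pfz⟩, ?_, ?_, ?_, ?_⟩
  · rw [Fin.lt_def]
    show (n+1) - (s-1) < (n - i) + 1
    omega
  · rw [Fin.lt_def]
    show (n - i) + 1 < (n - (i-1)) + 1
    omega
  · rw [v1, v2, Fin.castSucc_lt_castSucc_iff]
    refine lt_of_le_of_ne (Fin.le_last _) (fun he => ?_)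
    have hv := congrArg Fin.val (β.injective (he.trans hβr.symm))
    show False
    simp only [] at hv
    omega
  · rw [v2, v0]
    exact Fin.castSucc_lt_last _

lemma numActive_le {n : ℕ} (P : PatternSet) (α : Equiv.Perm (Fin n)) :
    numActive P α ≤ n + 1 := by
  have h : {j : ℕ | ActiveSite P α j} ⊆ Set.Icc 1 (n+1) := fun j hj => ⟨hj.1, hj.2.1⟩
  unfold numActive
  refine le_trans (Set.ncard_le_ncard h (Set.finite_Icc _ _)) ?_
  rw [← Finset.coe_Icc, Set.ncard_coe_finset, Nat.card_Icc]
  omega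

/-- For `p ≥ 2` and `P = {312, 2431, (p+1)p…21}` : if `α ∈ S_n(P)` has
exactly `k` active sites and `β = α^{↓i} ∈ S_{n+1}(P)` for some `1 ≤ i ≤ k`, then `β`
has either `i` or `i + 1` active sites. -/
theorem numActive_insert_cases (p : ℕ) (hp : 2 ≤ p) (P : PatternSet)
    (hP : P = {⟨3, perm312⟩, ⟨4, perm2431⟩,
      ⟨p + 1, (Fin.revPerm : Equiv.Perm (Fin (p + 1)))⟩})
    {n : ℕ} (α : Equiv.Perm (Fin n)) (hα : AvoidsSet α P) (k i : ℕ)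
    (hk : numActive P α = k) (hi1 : 1 ≤ i) (hik : i ≤ k)
    (hβ : AvoidsSet (insertMax α i) P) :
    numActive P (insertMax α i) = i ∨ numActive P (insertMax α i) = i + 1 := by
  have hin : i ≤ n + 1 := hik.trans (hk ▸ numActive_le P α)
  set A : Set ℕ := {s : ℕ | ActiveSite P (insertMax α i) s} with hA
  have hmem : ∀ s, s ∈ A ↔ ActiveSite P (insertMax α i) s := fun s => Iff.rfl
  have hsub1 : Set.Icc 1 i ⊆ A := by
    rintro s ⟨h1, h2⟩
    exact ⟨h1, by omega, avoids_insert_of_le p P hP α i s hi1 hin h1 h2 hβ⟩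
  have hsub2 : A ⊆ Set.Icc 1 (i+1) := by
    rintro s ⟨h1, h2, h3⟩
    refine ⟨h1, ?_⟩
    by_contra hcon
    push_neg at hcon
    have hs2 : i + 2 ≤ s := by omega
    have hs3 : s ≤ n + 2 := h2
    exact h3 ⟨3, perm312⟩ (by rw [hP]; simp)
      (contains312_insert_of_ge α i s hi1 hs2 hs3)
  have hcases : A = Set.Icc 1 i ∨ A = Set.Icc 1 (i+1) := by
    by_cases h : (i+1) ∈ A
    · right
      refine le_antisymm hsub2 ?_
      rintro s ⟨h1, h2⟩
      rcases Nat.lt_or_ge s (i+1) with hs | hs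
      · exact hsub1 ⟨h1, by omega⟩
      · have : s = i + 1 := by omega
        rw [this]; exact h
    · left
      refine le_antisymm ?_ hsub1
      intro s hs
      have h2 := hsub2 hs
      have hb1 : 1 ≤ s := h2.1
      have hb2 : s ≤ i + 1 := h2.2
      have hne : s ≠ i + 1 := fun he => h (he ▸ hs)
      exact ⟨hb1, by omega⟩
  rcases hcases with h | h
  · left
    rw [numActive, ← hA, h, ← Finset.coe_Icc, Set.ncard_coe_finset, Nat.card_Icc]
    omega
  · right
    rw [numActive, ← hA, h, ← Finset.coe_Icc, Set.ncard_coe_finset, Nat.card_Icc]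
    omega
end
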